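/- For each prime p, the Puiseux monoid M_p generated by { 1/(p^n · p_n) : n ∈ ℕ, p_n ≠ p }, where {p_n} is the increasing enumeration of all primes, is atomic but does not satisfy the ACCP. -/

import Mathlib

def IsAddAtom {M : Type*} [AddCommMonoid M] (a : M) : Prop :=
  ¬ IsAddUnit a ∧ ∀ x y : M, a = x + y → IsAddUnit x ∨ IsAddUnit y

def AddAtomic (M : Type*) [AddCommMonoid M] : Prop :=
  ∀ x : M, ¬ IsAddUnit x → ∃ l : Multiset M, (∀ a ∈ l, IsAddAtom a) ∧ l.sum = x

def AddACCP (M : Type*) [AddCommMonoid M] : Prop :=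
  ∀ f : ℕ → M, (∀ n, ∃ d, f n = f (n + 1) + d) →
    ∃ N, ∀ n ≥ N, ∃ d, f n = f N + d

/-- The Puiseux monoid `M_p = ⟨ 1/(p^n p_n) : p_n ≠ p ⟩`, where `p_n` is the `n`-th
prime in increasing order (here indexed from `0`, so the generator indexed by `n`
is `1 / (p^(n+1) * Nat.nth Nat.Prime n)`, taken whenever `Nat.nth Nat.Prime n ≠ p`). -/
def Mp (p : ℕ) : AddSubmonoid ℚ :=
  AddSubmonoid.closure
    {q : ℚ | ∃ n : ℕ, Nat.nth Nat.Prime n ≠ p ∧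
      q = 1 / ((p : ℚ) ^ (n + 1) * (Nat.nth Nat.Prime n : ℚ))}

namespace MpAux

noncomputable def qq (n : ℕ) : ℕ := Nat.nth Nat.Prime n

lemma qq_prime (n : ℕ) : (qq n).Prime := Nat.prime_nth_prime n

lemma qq_injective : Function.Injective qq :=
  Nat.nth_injective Nat.infinite_setOf_prime

lemma qq_le (n : ℕ) : n ≤ qq n :=
  (Nat.nth_strictMono Nat.infinite_setOf_prime).le_apply

noncomputable def gen (p n : ℕ) : ℚ := 1 / ((p : ℚ) ^ (n + 1) * (qq n : ℚ))

def S (p : ℕ) : Set ℚ :=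
  {q : ℚ | ∃ n : ℕ, Nat.nth Nat.Prime n ≠ p ∧
      q = 1 / ((p : ℚ) ^ (n + 1) * (Nat.nth Nat.Prime n : ℚ))}

lemma Mp_eq (p : ℕ) : Mp p = AddSubmonoid.closure (S p) := rfl

lemma mem_S_iff (p : ℕ) (x : ℚ) : x ∈ S p ↔ ∃ n : ℕ, qq n ≠ p ∧ x = gen p n := Iff.rfl

lemma gen_pos (p : ℕ) (hp : p.Prime) (n : ℕ) : 0 < gen p n := by
  have h1 : (0:ℚ) < (p:ℚ) := by exact_mod_cast hp.pos
  have h2 : (0:ℚ) < (qq n : ℚ) := by exact_mod_cast (qq_prime n).pos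
  exact div_pos one_pos (mul_pos (pow_pos h1 _) h2)

lemma S_pos (p : ℕ) (hp : p.Prime) {x : ℚ} (hx : x ∈ S p) : 0 < x := by
  obtain ⟨n, -, rfl⟩ := hx
  exact gen_pos p hp n

lemma mem_nonneg (p : ℕ) (hp : p.Prime) {x : ℚ} (hx : x ∈ Mp p) : 0 ≤ x := by
  rw [Mp_eq] at hx
  induction hx using AddSubmonoid.closure_induction with
  | mem x hx => exact (S_pos p hp hx).le
  | zero => exact le_refl 0
  | add x y _ _ hx hy => exact add_nonneg hx hy

lemma isAddUnit_iff (p : ℕ) (hp : p.Prime) (x : Mp p) : IsAddUnit x ↔ x = 0 := by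
  constructor
  · rintro ⟨u, rfl⟩
    have h := u.add_neg
    have h' : ((u : Mp p) : ℚ) + (((-u : AddUnits (Mp p)) : Mp p) : ℚ) = 0 := by
      have h2 := Subtype.ext_iff.mp h
      push_cast at h2
      exact h2
    have h1 : (0:ℚ) ≤ ((u : Mp p) : ℚ) := mem_nonneg p hp (u : Mp p).2
    have h2 : (0:ℚ) ≤ (((-u : AddUnits (Mp p)) : Mp p) : ℚ) :=
      mem_nonneg p hp ((-u : AddUnits (Mp p)) : Mp p).2
    have : ((u : Mp p) : ℚ) = 0 := by linarith
    exact Subtype.ext this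
  · rintro rfl; exact isAddUnit_zero

/-- `x` can be written with a denominator not divisible by `q`. -/
def NoQDen (q : ℕ) (x : ℚ) : Prop := ∃ a b : ℤ, ¬ (q:ℤ) ∣ b ∧ x = a / b

lemma noqden_zero {q : ℕ} (hq : q.Prime) : NoQDen q 0 :=
  ⟨0, 1, (Nat.prime_iff_prime_int.mp hq).not_dvd_one, by simp⟩

lemma noqden_add {q : ℕ} (hq : q.Prime) {x y : ℚ} (hx : NoQDen q x) (hy : NoQDen q y) :
    NoQDen q (x + y) := by
  obtain ⟨a, b, hb, rfl⟩ := hx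
  obtain ⟨c, d, hd, rfl⟩ := hy
  have hqi : Prime (q:ℤ) := Nat.prime_iff_prime_int.mp hq
  have hb0 : b ≠ 0 := fun h => hb (h ▸ dvd_zero _)
  have hd0 : d ≠ 0 := fun h => hd (h ▸ dvd_zero _)
  refine ⟨a * d + b * c, b * d, ?_, ?_⟩
  · intro h
    rcases hqi.dvd_mul.mp h with h | h
    · exact hb h
    · exact hd h
  · rw [div_add_div _ _ (by exact_mod_cast hb0) (by exact_mod_cast hd0)]
    push_cast
    ring_nf

lemma noqden_sum {q : ℕ} (hq : q.Prime) (l : Multiset ℚ) (h : ∀ x ∈ l, NoQDen q x) :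
    NoQDen q l.sum := by
  induction l using Multiset.induction_on with
  | empty => simpa using noqden_zero hq
  | cons a s ih =>
    rw [Multiset.sum_cons]
    exact noqden_add hq (h a (Multiset.mem_cons_self a s))
      (ih fun x hx => h x (Multiset.mem_cons_of_mem hx))

lemma noqden_gen (p : ℕ) (hp : p.Prime) {m n : ℕ} (hm : qq m ≠ p) (hmn : m ≠ n)
    (hn : qq n ≠ p) : NoQDen (qq n) (gen p m) := by
  refine ⟨1, (p ^ (m + 1) * qq m : ℕ), ?_, ?_⟩
  · rw [Int.natCast_dvd_natCast]
    intro h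
    rcases (Nat.Prime.dvd_mul (qq_prime n)).mp h with h | h
    · exact hn ((Nat.prime_dvd_prime_iff_eq (qq_prime n) hp).mp
        ((qq_prime n).dvd_of_dvd_pow h))
    · exact hmn (qq_injective ((Nat.prime_dvd_prime_iff_eq (qq_prime n) (qq_prime m)).mp h)).symm
  · unfold gen
    push_cast
    ring_nf

lemma not_noqden_gen (p : ℕ) (hp : p.Prime) (n : ℕ) : ¬ NoQDen (qq n) (gen p n) := by
  rintro ⟨a, b, hb, heq⟩
  have hb0 : b ≠ 0 := fun h => hb (h ▸ dvd_zero _)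
  have hb0' : (b : ℚ) ≠ 0 := by exact_mod_cast hb0
  have hp0 : (p:ℚ) ≠ 0 := by exact_mod_cast hp.pos.ne'
  have hq0 : ((qq n : ℕ) : ℚ) ≠ 0 := by exact_mod_cast (qq_prime n).pos.ne'
  have hD0 : (p:ℚ) ^ (n + 1) * (qq n : ℚ) ≠ 0 := mul_ne_zero (pow_ne_zero _ hp0) hq0
  unfold gen at heq
  rw [div_eq_div_iff hD0 hb0', one_mul] at heq
  have hZ : b = a * ((p:ℤ) ^ (n + 1) * (qq n : ℤ)) := by exact_mod_cast heq
  exact hb (hZ ▸ ⟨a * (p:ℤ) ^ (n + 1), by ring⟩)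

lemma sum_const {c : ℚ} (s : Multiset ℚ) (h : ∀ x ∈ s, x = c) :
    s.sum = (Multiset.card s) • c := by
  induction s using Multiset.induction_on with
  | empty => simp
  | cons a t ih =>
    rw [Multiset.sum_cons, Multiset.card_cons, h a (Multiset.mem_cons_self a t),
      ih fun x hx => h x (Multiset.mem_cons_of_mem hx), add_nsmul, one_nsmul, add_comm]

lemma key (p : ℕ) (hp : p.Prime) (n : ℕ) (hn : qq n ≠ p) (l : Multiset ℚ)
    (hl : ∀ x ∈ l, x ∈ S p) (hsum : l.sum = gen p n) : l = {gen p n} := by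
  classical
  set s := l.filter (fun x => x = gen p n) with hs
  set t := l.filter (fun x => ¬ x = gen p n) with ht
  have hst : s + t = l := Multiset.filter_add_not _ l
  have hsc : ∀ x ∈ s, x = gen p n := fun x hx => (Multiset.mem_filter.mp hx).2
  have hssum : s.sum = (Multiset.card s) • gen p n := sum_const s hsc
  have htmem : ∀ x ∈ t, x ∈ l ∧ x ≠ gen p n := fun x hx =>
    ⟨(Multiset.mem_filter.mp hx).1, (Multiset.mem_filter.mp hx).2⟩
  have htnoq : ∀ x ∈ t, NoQDen (qq n) x := by
    intro x hx
    obtain ⟨hxl, hxne⟩ := htmem x hx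
    obtain ⟨m, hm, rfl⟩ := hl x hxl
    have hmn : m ≠ n := fun h => hxne (by rw [h]; rfl)
    exact noqden_gen p hp hm hmn hn
  have htpos : ∀ x ∈ t, 0 < x := fun x hx => S_pos p hp (hl x (htmem x hx).1)
  have hTnn : 0 ≤ t.sum := Multiset.sum_nonneg fun x hx => (htpos x hx).le
  have hTnoq : NoQDen (qq n) t.sum := noqden_sum (qq_prime n) t htnoq
  have heq : (Multiset.card s) • gen p n + t.sum = gen p n := by
    rw [← hssum, ← Multiset.sum_add, hst, hsum]
  have hgpos := gen_pos p hp n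
  have hcases : Multiset.card s = 0 ∨ Multiset.card s = 1 ∨ 2 ≤ Multiset.card s := by omega
  rcases hcases with h | h | hc
  · -- card = 0
    exfalso
    have hs0 : s = 0 := Multiset.card_eq_zero.mp h
    rw [h, zero_nsmul, zero_add] at heq
    exact absurd (heq ▸ hTnoq) (not_noqden_gen p hp n)
  · -- card = 1
    have hT0 : t.sum = 0 := by
      rw [h, one_nsmul] at heq
      linarith
    have ht0 : t = 0 := by
      by_contra h0
      obtain ⟨x, hx⟩ := Multiset.exists_mem_of_ne_zero h0
      have h1 := Multiset.single_le_sum (fun y hy => (htpos y hy).le) x hx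
      have h2 := htpos x hx
      rw [hT0] at h1
      linarith
    obtain ⟨a, ha⟩ := Multiset.card_eq_one.mp h
    have hag : a = gen p n := hsc a (ha ▸ Multiset.mem_singleton_self a)
    rw [← hst, ht0, ha, hag, add_zero]
  · -- card ≥ 2
    exfalso
    have h2 : (2:ℚ) ≤ (Multiset.card s : ℚ) := by exact_mod_cast hc
    have hsm : (Multiset.card s) • gen p n = (Multiset.card s : ℚ) * gen p n := by
      rw [nsmul_eq_mul]
    rw [hsm] at heq
    nlinarith

lemma gen_mem (p : ℕ) {n : ℕ} (hn : qq n ≠ p) : gen p n ∈ Mp p := by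
  rw [Mp_eq]
  exact AddSubmonoid.subset_closure ⟨n, hn, rfl⟩

lemma gen_isAddAtom (p : ℕ) (hp : p.Prime) {n : ℕ} (hn : qq n ≠ p)
    (hmem : gen p n ∈ Mp p) : IsAddAtom (⟨gen p n, hmem⟩ : Mp p) := by
  constructor
  · rw [isAddUnit_iff p hp]
    intro h
    have : gen p n = 0 := congrArg (fun z : Mp p => (z : ℚ)) h
    exact (gen_pos p hp n).ne' this
  · intro x y hxy
    have hx : (x : ℚ) ∈ AddSubmonoid.closure (S p) := x.2
    have hy : (y : ℚ) ∈ AddSubmonoid.closure (S p) := y.2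
    obtain ⟨lx, hlx, hlxs⟩ := AddSubmonoid.exists_multiset_of_mem_closure hx
    obtain ⟨ly, hly, hlys⟩ := AddSubmonoid.exists_multiset_of_mem_closure hy
    have hsum : (lx + ly).sum = gen p n := by
      rw [Multiset.sum_add, hlxs, hlys]
      exact (congrArg (fun z : Mp p => (z : ℚ)) hxy).symm
    have hkey := key p hp n hn (lx + ly)
      (fun z hz => by rcases Multiset.mem_add.mp hz with h | h
                      exacts [hlx z h, hly z h]) hsum
    have hcard : Multiset.card lx + Multiset.card ly = 1 := by
      have := congrArg Multiset.card hkey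
      simpa using this
    have hc : Multiset.card lx = 0 ∨ Multiset.card ly = 0 := by omega
    rcases hc with h | h
    · left
      rw [isAddUnit_iff p hp]
      have : lx = 0 := Multiset.card_eq_zero.mp h
      exact Subtype.ext (by rw [← hlxs, this, Multiset.sum_zero]; rfl)
    · right
      rw [isAddUnit_iff p hp]
      have : ly = 0 := Multiset.card_eq_zero.mp h
      exact Subtype.ext (by rw [← hlys, this, Multiset.sum_zero]; rfl)

lemma atomic (p : ℕ) (hp : p.Prime) : AddAtomic (Mp p) := by
  intro x _
  have hx : (x : ℚ) ∈ AddSubmonoid.closure (S p) := x.2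
  obtain ⟨l, hl, hls⟩ := AddSubmonoid.exists_multiset_of_mem_closure hx
  refine ⟨l.pmap (fun q hq => (⟨q, by rw [Mp_eq]; exact AddSubmonoid.subset_closure hq⟩ : Mp p))
    hl, ?_, ?_⟩
  · intro a ha
    obtain ⟨q, hq, rfl⟩ := Multiset.mem_pmap.mp ha
    obtain ⟨m, hm, hqe⟩ := hl q hq
    subst hqe
    exact gen_isAddAtom p hp hm _
  · apply Subtype.ext
    have := map_multiset_sum ((Mp p).subtype)
      (l.pmap (fun q hq => (⟨q, by rw [Mp_eq]; exact AddSubmonoid.subset_closure hq⟩ : Mp p)) hl)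
    rw [AddSubmonoid.coe_subtype] at this
    rw [show ((Multiset.sum _ : Mp p) : ℚ) = _ from this]
    rw [Multiset.map_pmap]
    simp only [AddSubmonoid.coe_subtype]
    rw [Multiset.pmap_eq_map, Multiset.map_id']
    exact hls

lemma pow_mem (p : ℕ) (hp : p.Prime) (n : ℕ) : (1 : ℚ) / (p:ℚ) ^ (n + 1) ∈ Mp p := by
  set m := n + p + 1 with hm
  have hqm : qq m ≠ p := by
    have h1 : m ≤ qq m := qq_le m
    omega
  have hgen : gen p m ∈ Mp p := gen_mem p hqm
  have hmem : (qq m * p ^ (p + 1)) • gen p m ∈ Mp p := AddSubmonoid.nsmul_mem _ hgen _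
  have hval : (qq m * p ^ (p + 1)) • gen p m = (1 : ℚ) / (p:ℚ) ^ (n + 1) := by
    rw [nsmul_eq_mul]
    unfold gen
    have hp0 : (p:ℚ) ≠ 0 := by exact_mod_cast hp.pos.ne'
    have hq0 : ((qq m : ℕ) : ℚ) ≠ 0 := by exact_mod_cast (qq_prime m).pos.ne'
    have hpow : (p:ℚ) ^ (m + 1) = (p:ℚ) ^ (n + 1) * (p:ℚ) ^ (p + 1) := by
      rw [← pow_add]; congr 1; omega
    field_simp
    rw [hpow]
    push_cast
    ring
  rwa [hval] at hmem

lemma not_accp (p : ℕ) (hp : p.Prime) : ¬ AddACCP (Mp p) := by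
  intro h
  set f : ℕ → Mp p := fun n => ⟨(1 : ℚ) / (p:ℚ) ^ (n + 1), pow_mem p hp n⟩ with hf
  have hp1 : (1:ℚ) < (p:ℚ) := by exact_mod_cast hp.one_lt
  have hp0 : (0:ℚ) < (p:ℚ) := by linarith
  have hdesc : ∀ n, ∃ d, f n = f (n + 1) + d := by
    intro n
    refine ⟨⟨(p - 1 : ℕ) • ((1 : ℚ) / (p:ℚ) ^ (n + 2)),
      AddSubmonoid.nsmul_mem _ (pow_mem p hp (n+1)) _⟩, ?_⟩
    apply Subtype.ext
    show (1 : ℚ) / (p:ℚ) ^ (n + 1) = (1 : ℚ) / (p:ℚ) ^ (n + 2) + (p - 1 : ℕ) • ((1 : ℚ) / (p:ℚ) ^ (n + 2))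
    rw [nsmul_eq_mul]
    have hc : ((p - 1 : ℕ) : ℚ) = (p:ℚ) - 1 := by
      have : 1 ≤ p := hp.one_lt.le
      push_cast [this]
      ring
    rw [hc]
    have hpow0 : (p:ℚ) ^ (n + 2) ≠ 0 := pow_ne_zero _ hp0.ne'
    have hpow1 : (p:ℚ) ^ (n + 1) ≠ 0 := pow_ne_zero _ hp0.ne'
    field_simp
    ring
  obtain ⟨N, hN⟩ := h f hdesc
  obtain ⟨d, hd⟩ := hN (N + 1) (by omega)
  have hd' : (1 : ℚ) / (p:ℚ) ^ (N + 2) = (1 : ℚ) / (p:ℚ) ^ (N + 1) + (d : ℚ) :=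
    congrArg (fun z : Mp p => (z : ℚ)) hd
  have hdnn : (0:ℚ) ≤ (d : ℚ) := mem_nonneg p hp d.2
  have hlt : (1 : ℚ) / (p:ℚ) ^ (N + 2) < (1 : ℚ) / (p:ℚ) ^ (N + 1) := by
    apply div_lt_div_of_pos_left one_pos (pow_pos hp0 _)
    have : (p:ℚ) ^ (N + 2) = (p:ℚ) ^ (N + 1) * (p:ℚ) := by rw [← pow_succ]
    nlinarith [pow_pos hp0 (N + 1)]
  linarith

end MpAux

theorem Mp_atomic_not_accp (p : ℕ) (hp : p.Prime) :
    AddAtomic (Mp p) ∧ ¬ AddACCP (Mp p) := by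
  exact ⟨MpAux.atomic p hp, MpAux.not_accp p hp⟩
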